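/- If φ: C → C is a gauge-reversing map that is differentiable at a point x ∈ C with derivative equal to −Id, then φ(x) = x. -/

import Mathlib

open Set Filter Topology

/-- The gauge of a cone: `M_C(x,y) = inf {λ > 0 | λ • y - x ∈ closure C}`. -/
noncomputable def coneGauge {V : Type*} [NormedAddCommGroup V] [NormedSpace ℝ V]
    (C : Set V) (x y : V) : ℝ :=
  sInf {l : ℝ | 0 < l ∧ l • y - x ∈ closure C}

/-- A proper open convex cone. -/
def IsProperCone {V : Type*} [NormedAddCommGroup V] [NormedSpace ℝ V] (C : Set V) : Prop :=
  C.Nonempty ∧ IsOpen C ∧ Convex ℝ C ∧ (∀ x ∈ C, ∀ l : ℝ, 0 < l → l • x ∈ C) ∧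
    closure C ∩ (-(closure C)) ⊆ {0}

/-- A gauge-reversing map that is differentiable at a point `x` with derivative `-Id`
fixes `x`. -/
theorem gauge_reversing_deriv_neg_id_fixed_point {V : Type*} [NormedAddCommGroup V]
    [NormedSpace ℝ V] [FiniteDimensional ℝ V] (C : Set V) (hC : IsProperCone C)
    (φ : V → V) (hmaps : Set.MapsTo φ C C)
    (hrev : ∀ x ∈ C, ∀ y ∈ C, coneGauge C (φ x) (φ y) = coneGauge C y x)
    (x : V) (hx : x ∈ C)
    (hderiv : HasFDerivAt φ (-(ContinuousLinearMap.id ℝ V)) x) :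
    φ x = x := by
  obtain ⟨hne, hopen, hconv, hcone, hprop⟩ := hC
  rcases subsingleton_or_nontrivial V with hV | hV
  · exact Subsingleton.elim _ _
  -- 0 is in the closure of C
  have h0cl : (0 : V) ∈ closure C := by
    have htend : Tendsto (fun ε : ℝ => ε • x) (nhdsWithin 0 (Set.Ioi 0)) (𝓝 0) := by
      have h1 : Tendsto (fun ε : ℝ => ε • x) (𝓝 0) (𝓝 ((0:ℝ) • x)) :=
        (continuous_id.smul continuous_const).tendsto 0
      simpa using h1.mono_left nhdsWithin_le_nhds
    exact mem_closure_of_tendsto htend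
      (eventually_nhdsWithin_of_forall fun ε hε => hcone x hx ε hε)
  -- x ≠ 0
  have hxne : x ≠ 0 := by
    intro hx0
    have hC0 : C ∈ 𝓝 (0 : V) := hopen.mem_nhds (hx0 ▸ hx)
    have hCn0 : (-C) ∈ 𝓝 (0 : V) := by
      have : IsOpen (-C) := hopen.neg
      exact this.mem_nhds (by simpa using (hx0 ▸ hx : (0:V) ∈ C))
    have hmem : (C ∩ -C) ∈ nhdsWithin (0:V) {(0:V)}ᶜ :=
      mem_nhdsWithin_of_mem_nhds (Filter.inter_mem hC0 hCn0)
    obtain ⟨v, ⟨hv1, hv2⟩, hv0⟩ :=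
      Filter.nonempty_of_mem (Filter.inter_mem hmem self_mem_nhdsWithin)
    have : v ∈ ({0} : Set V) := hprop ⟨subset_closure hv1,
      Set.mem_neg.2 (subset_closure hv2)⟩
    exact hv0 this
  set y := φ x with hy
  have hyC : y ∈ C := hmaps hx
  -- gauge along the ray through x
  have hray : ∀ a b : ℝ, 0 < a → 0 < b → coneGauge C (a • x) (b • x) = a / b := by
    intro a b ha hb
    have hset : {l : ℝ | 0 < l ∧ l • (b • x) - a • x ∈ closure C} = Set.Ici (a / b) := by
      ext l
      simp only [Set.mem_setOf_eq, Set.mem_Ici]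
      have hrw : l • (b • x) - a • x = (l * b - a) • x := by
        rw [smul_smul, sub_smul]
      rw [hrw]
      constructor
      · rintro ⟨hl, hmem⟩
        by_contra hlt
        push_neg at hlt
        have hneg : l * b - a < 0 := by
          have := (lt_div_iff₀ hb).mp hlt
          linarith
        have hpos : (0:ℝ) < a - l * b := by linarith
        have hmem2 : -((l * b - a) • x) ∈ closure C := by
          have : (a - l * b) • x ∈ C := hcone x hx _ hpos
          have heq : -((l * b - a) • x) = (a - l * b) • x := by
            rw [← neg_smul]; ring_nf
          rw [heq]
          exact subset_closure this
        have : (l * b - a) • x ∈ ({0} : Set V) :=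
          hprop ⟨hmem, Set.mem_neg.2 hmem2⟩
        have h0 : (l * b - a) • x = 0 := this
        rcases smul_eq_zero.mp h0 with h | h
        · linarith
        · exact hxne h
      · intro hle
        have hl : 0 < l := lt_of_lt_of_le (div_pos ha hb) hle
        have hge : 0 ≤ l * b - a := by
          have := (div_le_iff₀ hb).mp hle
          linarith
        rcases hge.eq_or_lt with h | h
        · refine ⟨hl, ?_⟩
          rw [← h, zero_smul]
          exact h0cl
        · exact ⟨hl, subset_closure (hcone x hx _ h)⟩
    rw [coneGauge, hset, csInf_Ici]
  -- attainment of the gauge infimum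
  have hatt : ∀ w ∈ C, ∀ z : V, ∀ m : ℝ, 0 < m → coneGauge C z w = m →
      m • w - z ∈ closure C := by
    intro w hw z m hm hg
    set S := {l : ℝ | 0 < l ∧ l • w - z ∈ closure C} with hS
    have hSne : S.Nonempty := by
      have htend0 : Tendsto (fun l : ℝ => l⁻¹ • z) atTop (𝓝 (0 : V)) := by
        have h0 : Tendsto (fun l : ℝ => l⁻¹) atTop (𝓝 (0:ℝ)) := tendsto_inv_atTop_zero
        simpa using h0.smul_const z
      have htend : Tendsto (fun l : ℝ => w - l⁻¹ • z) atTop (𝓝 w) := by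
        simpa using tendsto_const_nhds.sub htend0
      have hev : ∀ᶠ l in atTop, w - l⁻¹ • z ∈ C :=
        htend.eventually (hopen.mem_nhds hw)
      obtain ⟨l, hl1, hl0⟩ := (hev.and (eventually_gt_atTop 0)).exists
      refine ⟨l, hl0, ?_⟩
      have hmem := hcone _ hl1 l hl0
      have heq : l • (w - l⁻¹ • z) = l • w - z := by
        rw [smul_sub, smul_inv_smul₀ (ne_of_gt hl0)]
      rw [heq] at hmem
      exact subset_closure hmem
    have hbdd : BddBelow S := ⟨0, fun l hl => le_of_lt hl.1⟩
    have hmmem : m ∈ closure S := by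
      rw [coneGauge] at hg
      rw [← hg]
      exact csInf_mem_closure hSne hbdd
    have hcont : Continuous (fun l : ℝ => l • w - z) :=
      (continuous_id.smul continuous_const).sub continuous_const
    have hmap := map_mem_closure hcont hmmem (fun l hl => hl.2)
    simpa [closure_closure] using hmap
  -- key formula: φ ((1+t) • x) = (1+t)⁻¹ • y
  have key : ∀ t : ℝ, 0 < 1 + t → φ ((1 + t) • x) = (1 + t)⁻¹ • y := by
    intro t ht
    have hz : (1 + t) • x ∈ C := hcone x hx _ ht
    have hg1 : coneGauge C y (φ ((1 + t) • x)) = 1 + t := by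
      rw [hy, hrev x hx _ hz]
      have h := hray (1 + t) 1 ht one_pos
      simpa using h
    have hg2 : coneGauge C (φ ((1 + t) • x)) y = (1 + t)⁻¹ := by
      rw [hy, hrev _ hz x hx]
      have h := hray 1 (1 + t) one_pos ht
      simpa [one_div] using h
    have hA : (1 + t) • φ ((1 + t) • x) - y ∈ closure C :=
      hatt _ (hmaps hz) y (1 + t) ht hg1
    have hB : (1 + t)⁻¹ • y - φ ((1 + t) • x) ∈ closure C :=
      hatt y hyC _ _ (inv_pos.2 ht) hg2
    have hnegA : -((1 + t) • φ ((1 + t) • x) - y) ∈ closure C := by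
      have h2 := map_mem_closure (continuous_const_smul (1 + t)) hB
        (fun u hu => hcone u hu _ ht)
      have heq : (1 + t) • ((1 + t)⁻¹ • y - φ ((1 + t) • x)) =
          -((1 + t) • φ ((1 + t) • x) - y) := by
        rw [smul_sub, smul_inv_smul₀ (ne_of_gt ht)]
        abel
      rwa [heq] at h2
    have hzero : (1 + t) • φ ((1 + t) • x) - y = 0 :=
      hprop ⟨hA, Set.mem_neg.2 hnegA⟩
    have heq2 : (1 + t) • φ ((1 + t) • x) = y := sub_eq_zero.mp hzero
    rw [← heq2, inv_smul_smul₀ (ne_of_gt ht)]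
  -- derivative argument
  have hg : HasDerivAt (fun t : ℝ => φ (x + t • x)) (-x) 0 := by
    have h1 : HasDerivAt (fun t : ℝ => x + t • x) x 0 := by
      simpa using ((hasDerivAt_id (0:ℝ)).smul_const x).const_add x
    have hderiv' : HasFDerivAt φ (-(ContinuousLinearMap.id ℝ V)) (x + (0:ℝ) • x) := by
      simpa using hderiv
    have h2 := hderiv'.comp_hasDerivAt 0 h1
    simpa [Function.comp_def] using h2
  have hg2 : HasDerivAt (fun t : ℝ => (1 + t)⁻¹ • y) (-y) 0 := by
    have h1 : HasDerivAt (fun t : ℝ => 1 + t) 1 0 := by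
      simpa using (hasDerivAt_id (0:ℝ)).const_add 1
    have h2 : HasDerivAt (fun t : ℝ => (1 + t)⁻¹) (-1) 0 := by
      have := h1.inv (by norm_num)
      simpa [Pi.inv_def] using this
    have h3 := h2.smul_const y
    simpa using h3
  have heq : (fun t : ℝ => φ (x + t • x)) =ᶠ[𝓝 (0:ℝ)] (fun t => (1 + t)⁻¹ • y) := by
    have hev : ∀ᶠ t in 𝓝 (0:ℝ), -1 < t :=
      eventually_gt_nhds (show (-1:ℝ) < 0 by norm_num)
    filter_upwards [hev] with t ht
    have h := key t (by linarith)
    rw [← h]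
    congr 1
    module
  have hg' : HasDerivAt (fun t : ℝ => φ (x + t • x)) (-y) 0 := by
    exact HasDerivAt.congr_of_eventuallyEq hg2 heq
  have hxy : -x = -y := hg.unique hg'
  have hyx : y = x := (neg_injective hxy).symm
  exact hyx
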